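/- Loop resolvents hold in normal models: let S be a finite set of SNF clauses, M a normal model of Aug(S), C ⇒ ◇l a sometime clause of S, and A_0 ⇒ ◯B_0, …, A_n ⇒ ◯B_n formulae with each A_i, B_i a conjunction of literals such that (M,0) ⊨ □(A_i ⇒ ◯B_i) for every i and, for every i, the propositional formulae B_i ⇒ ¬l and B_i ⇒ (A_0 ∨ … ∨ A_n) are valid. Then for every i, M satisfies □(start ⇒ (¬C ∨ l ∨ ¬A_i)), □(true ⇒ ◯(¬C ∨ l ∨ ¬A_i)) and □(w_l ⇒ ◯(l ∨ ¬A_i)) at index 0; consequently the clause set obtained from Aug(S) by a temporal resolution step is satisfiable (indeed has M as a normal model) whenever Aug(S) is. -/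

import Mathlib

/-- A literal over proposition symbols `P`: a proposition symbol (`pos = true`)
or a negated proposition symbol (`pos = false`). -/
structure Lit (P : Type) where
  pos : Bool
  sym : P

/-- The complement of a literal. -/
def Lit.negate {P : Type} (l : Lit P) : Lit P := ⟨!l.pos, l.sym⟩

/-- A literal holds in model `σ` at index `i`. -/
def Lit.holds {P : Type} (σ : ℕ → Set P) (i : ℕ) (l : Lit P) : Prop :=
  if l.pos then l.sym ∈ σ i else l.sym ∉ σ i

/-- A conjunction of literals holds (the empty conjunction is the constant `true`). -/
def conjHolds {P : Type} (σ : ℕ → Set P) (i : ℕ) (L : List (Lit P)) : Prop :=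
  ∀ l ∈ L, Lit.holds σ i l

/-- A disjunction of literals holds. -/
def disjHolds {P : Type} (σ : ℕ → Set P) (i : ℕ) (L : List (Lit P)) : Prop :=
  ∃ l ∈ L, Lit.holds σ i l

/-- SNF clauses: initial clauses `start ⇒ ⋁ rhs`, step clauses `⋀ lhs ⇒ ◯⋁ rhs`
(an empty `lhs` is the constant `true`), and sometime clauses `⋀ lhs ⇒ ◇ev`. -/
inductive SNF (P : Type) : Type
  | initial (rhs : List (Lit P))
  | step (lhs rhs : List (Lit P))
  | sometime (lhs : List (Lit P)) (ev : Lit P)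

/-- Satisfaction of an SNF clause in model `σ` at index `i`. -/
def SNF.holds {P : Type} (σ : ℕ → Set P) (i : ℕ) : SNF P → Prop
  | .initial rhs => i = 0 → disjHolds σ i rhs
  | .step lhs rhs => conjHolds σ i lhs → disjHolds σ (i + 1) rhs
  | .sometime lhs ev => conjHolds σ i lhs → ∃ k, i ≤ k ∧ Lit.holds σ k ev

/-- `σ` is a model of the clause set `S`, i.e. `(σ,0) ⊨ □⋀_{A ∈ S} A`. -/
def IsModel {P : Type} (σ : ℕ → Set P) (S : Set (SNF P)) : Prop :=
  ∀ (i : ℕ), ∀ c ∈ S, SNF.holds σ i c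

/-- The proposition symbols occurring in an SNF clause. -/
def SNF.syms {P : Type} : SNF P → Set P
  | .initial rhs => {p | ∃ l ∈ rhs, Lit.sym l = p}
  | .step lhs rhs => {p | ∃ l ∈ lhs ++ rhs, Lit.sym l = p}
  | .sometime lhs ev => {p | ∃ l ∈ ev :: lhs, Lit.sym l = p}

/-- The proposition symbols occurring in a clause set. -/
def symsOf {P : Type} (S : Set (SNF P)) : Set P := ⋃ c ∈ S, c.syms

/-- The literals occurring as eventualities (◇l on the right-hand side of
sometime clauses) in `S`. -/
def evLits {P : Type} (S : Set (SNF P)) : Set (Lit P) :=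
  {l | ∃ lhs, SNF.sometime lhs l ∈ S}

/-- The positive literal on symbol `p`. -/
def posLit {P : Type} (p : P) : Lit P := ⟨true, p⟩

/-- The augmented clause set `Aug(S)`, where `w l` is the fresh symbol `w_l`
for each eventuality literal `l` of `S`: adds `w_l ⇒ ◯(l ∨ w_l)` and, for each
sometime clause `C ⇒ ◇l` of `S`, `start ⇒ (¬C ∨ l ∨ w_l)` and `true ⇒ ◯(¬C ∨ l ∨ w_l)`. -/
def Aug {P : Type} (S : Set (SNF P)) (w : Lit P → P) : Set (SNF P) :=
  S ∪ {c | ∃ l ∈ evLits S, c = SNF.step [posLit (w l)] [l, posLit (w l)]}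
    ∪ {c | ∃ lhs l, SNF.sometime lhs l ∈ S ∧
          c = SNF.initial (lhs.map Lit.negate ++ [l, posLit (w l)])}
    ∪ {c | ∃ lhs l, SNF.sometime lhs l ∈ S ∧
          c = SNF.step [] (lhs.map Lit.negate ++ [l, posLit (w l)])}

/-- The symbols `w_l` are fresh: none occurs in `S`, and distinct eventuality
literals receive distinct fresh symbols. -/
def FreshW {P : Type} (S : Set (SNF P)) (w : Lit P → P) : Prop :=
  (∀ l ∈ evLits S, ∀ c ∈ S, w l ∉ SNF.syms c) ∧ Set.InjOn w (evLits S)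

/-- A normal model of `Aug(S)`: a model of `Aug(S)` which moreover satisfies
`□(w_l ⇔ (¬l ∧ ◇l))` for each eventuality literal `l` of `S`. -/
def NormalModel {P : Type} (σ : ℕ → Set P) (S : Set (SNF P)) (w : Lit P → P) : Prop :=
  IsModel σ (Aug S w) ∧
  ∀ (i : ℕ), ∀ l ∈ evLits S,
    (w l ∈ σ i ↔ (¬ Lit.holds σ i l ∧ ∃ k, i ≤ k ∧ Lit.holds σ k l))

/-- The loop resolvents for the sometime clause `C ⇒ ◇l` and the loop formula
`⋁ᵢ Aᵢ`: for each `i`, `start ⇒ (¬C ∨ l ∨ ¬Aᵢ)`, `true ⇒ ◯(¬C ∨ l ∨ ¬Aᵢ)` and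
`w_l ⇒ ◯(l ∨ ¬Aᵢ)`. -/
def loopResolvents {P : Type} (w : Lit P → P) (C : List (Lit P)) (l : Lit P)
    (n : ℕ) (A : Fin (n + 1) → List (Lit P)) : Set (SNF P) :=
  {c | ∃ i : Fin (n + 1),
    c = SNF.initial (C.map Lit.negate ++ l :: (A i).map Lit.negate) ∨
    c = SNF.step [] (C.map Lit.negate ++ l :: (A i).map Lit.negate) ∨
    c = SNF.step [posLit (w l)] (l :: (A i).map Lit.negate)}

/-- loop resolvents hold in normal models: if `M` is a normal model of
`Aug(S)`, `C ⇒ ◇l` is a sometime clause of `S`, and `A₀ ⇒ ◯B₀, …, Aₙ ⇒ ◯Bₙ` are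
merged clauses holding throughout `M` whose right-hand sides propositionally imply
`¬l` and `A₀ ∨ … ∨ Aₙ`, then all loop resolvents hold throughout `M`; consequently
the clause set obtained from `Aug(S)` by this temporal resolution step has `M` as a
model (hence is satisfiable whenever `Aug(S)` is). -/

lemma holds_negate {P : Type} (σ : ℕ → Set P) (i : ℕ) (l : Lit P) :
    Lit.holds σ i l.negate ↔ ¬ Lit.holds σ i l := by
  cases l with
  | mk pos sym => cases pos <;> simp [Lit.holds, Lit.negate]

lemma conj_of_not_disj_neg {P : Type} (σ : ℕ → Set P) (i : ℕ) (L : List (Lit P))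
    (h : ¬ ∃ x ∈ L.map Lit.negate, Lit.holds σ i x) : conjHolds σ i L := by
  intro x hx
  by_contra hc
  exact h ⟨x.negate, List.mem_map_of_mem (f := Lit.negate) hx, (holds_negate σ i x).mpr hc⟩

theorem stmt_9 {P : Type} [Countable P] (S : Set (SNF P)) (hfin : S.Finite)
    (w : Lit P → P) (hw : FreshW S w) (M : ℕ → Set P) (hM : NormalModel M S w)
    (C : List (Lit P)) (l : Lit P) (hCl : SNF.sometime C l ∈ S)
    (n : ℕ) (A B : Fin (n + 1) → List (Lit P))
    (hAB : ∀ (i : Fin (n + 1)) (j : ℕ), conjHolds M j (A i) → conjHolds M (j + 1) (B i))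
    (h1 : ∀ (i : Fin (n + 1)) (σ : ℕ → Set P) (k : ℕ),
      conjHolds σ k (B i) → Lit.holds σ k l.negate)
    (h2 : ∀ (i : Fin (n + 1)) (σ : ℕ → Set P) (k : ℕ),
      conjHolds σ k (B i) → ∃ j : Fin (n + 1), conjHolds σ k (A j)) :
    (∀ i : Fin (n + 1),
      (∀ m : ℕ, SNF.holds M m (SNF.initial (C.map Lit.negate ++ l :: (A i).map Lit.negate))) ∧
      (∀ m : ℕ, SNF.holds M m (SNF.step [] (C.map Lit.negate ++ l :: (A i).map Lit.negate))) ∧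
      (∀ m : ℕ, SNF.holds M m (SNF.step [posLit (w l)] (l :: (A i).map Lit.negate)))) ∧
    IsModel M (Aug S w ∪ loopResolvents w C l n A) := by
  obtain ⟨hmod, hnorm⟩ := hM
  have hlev : l ∈ evLits S := ⟨C, hCl⟩
  -- l fails at every index strictly after one where some A i holds
  have loopFail : ∀ d j, (∃ i, conjHolds M j (A i)) → ¬ Lit.holds M (j + 1 + d) l := by
    intro d
    induction d with
    | zero =>
      intro j ⟨i, hA⟩
      have := h1 i M (j + 1) (hAB i j hA)
      exact (holds_negate M (j + 1) l).mp this
    | succ d ih =>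
      intro j ⟨i, hA⟩
      obtain ⟨i', hA'⟩ := h2 i M (j + 1) (hAB i j hA)
      have := ih (j + 1) ⟨i', hA'⟩
      have e : j + 1 + 1 + d = j + 1 + (d + 1) := by omega
      rwa [e] at this
  have loopFail' : ∀ j k, j < k → (∃ i, conjHolds M j (A i)) → ¬ Lit.holds M k l := by
    intro j k hjk hA
    have e : k = j + 1 + (k - j - 1) := by omega
    rw [e]; exact loopFail _ j hA
  -- key: if C and A i hold at m then l holds at m
  have key : ∀ (i : Fin (n + 1)) (m : ℕ), conjHolds M m C → conjHolds M m (A i) →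
      Lit.holds M m l := by
    intro i m hC hA
    have hh : SNF.holds M m (SNF.sometime C l) :=
      hmod m _ (Or.inl (Or.inl (Or.inl hCl)))
    obtain ⟨k, hk, hl⟩ := hh hC
    rcases Nat.lt_or_ge m k with h | h
    · exact absurd hl (loopFail' m k h ⟨i, hA⟩)
    · have : k = m := le_antisymm h hk
      rwa [this] at hl
  -- the main disjunction
  have main : ∀ (i : Fin (n + 1)) (m : ℕ),
      disjHolds M m (C.map Lit.negate ++ l :: (A i).map Lit.negate) := by
    intro i m
    by_contra h
    simp only [disjHolds, List.mem_append, List.mem_cons] at h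
    push_neg at h
    have hC : conjHolds M m C := conj_of_not_disj_neg M m C (by
      rintro ⟨x, hx, hhx⟩; exact (h x (Or.inl hx)) hhx)
    have hA : conjHolds M m (A i) := conj_of_not_disj_neg M m (A i) (by
      rintro ⟨x, hx, hhx⟩; exact (h x (Or.inr (Or.inr hx))) hhx)
    exact h l (Or.inr (Or.inl rfl)) (key i m hC hA)
  -- the w-clause disjunction
  have mainW : ∀ (i : Fin (n + 1)) (m : ℕ), w l ∈ M m →
      disjHolds M (m + 1) (l :: (A i).map Lit.negate) := by
    intro i m hwm
    by_contra h
    simp only [disjHolds, List.mem_cons] at h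
    push_neg at h
    have hA : conjHolds M (m + 1) (A i) := conj_of_not_disj_neg M (m + 1) (A i) (by
      rintro ⟨x, hx, hhx⟩; exact (h x (Or.inr hx)) hhx)
    obtain ⟨hnl, k, hk, hl⟩ := (hnorm m l hlev).mp hwm
    rcases Nat.lt_or_ge (m + 1) k with hc | hc
    · exact loopFail' (m + 1) k hc ⟨i, hA⟩ hl
    · have : k = m ∨ k = m + 1 := by omega
      rcases this with rfl | rfl
      · exact hnl hl
      · exact h l (Or.inl rfl) hl
  have part1 : ∀ i : Fin (n + 1),
      (∀ m : ℕ, SNF.holds M m (SNF.initial (C.map Lit.negate ++ l :: (A i).map Lit.negate))) ∧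
      (∀ m : ℕ, SNF.holds M m (SNF.step [] (C.map Lit.negate ++ l :: (A i).map Lit.negate))) ∧
      (∀ m : ℕ, SNF.holds M m (SNF.step [posLit (w l)] (l :: (A i).map Lit.negate))) := by
    intro i
    refine ⟨fun m _ => main i m, fun m _ => main i (m + 1), fun m hc => ?_⟩
    exact mainW i m (hc (posLit (w l)) (List.mem_singleton.mpr rfl))
  refine ⟨part1, fun m c hc => ?_⟩
  rcases hc with hc | hc
  · exact hmod m c hc
  · obtain ⟨i, h | h | h⟩ := hc <;> subst h
    · exact (part1 i).1 m
    · exact (part1 i).2.1 m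
    · exact (part1 i).2.2 m
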